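/- In a trim lattice, for every cover relation y ⋖ z the intersection y_M ∩ z_J consists of exactly one element, and this element equals both min(z_J \ y_J) and max(y_M \ z_M). -/

import Mathlib

/-- An element `x` of a lattice is *left modular* if `(y ⊔ x) ⊓ z = y ⊔ (x ⊓ z)`
for all `y ≤ z`. -/
def LeftModular {L : Type*} [Lattice L] (x : L) : Prop :=
  ∀ y z : L, y ≤ z → (y ⊔ x) ⊓ z = y ⊔ (x ⊓ z)

/-- The data of an extremal lattice of length `n` together with a fixed
maximal-length chain `x₀ ⋖ ⋯ ⋖ xₙ` and the induced numberings of the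
join-irreducibles `j₁, …, jₙ` and meet-irreducibles `m₁, …, mₙ`. -/
structure ExtremalChainData (L : Type*) [Lattice L] [Fintype L] [BoundedOrder L]
    (n : ℕ) where
  x : Fin (n + 1) → L
  x_strictMono : StrictMono x
  x_bot : x 0 = ⊥
  x_top : x (Fin.last n) = ⊤
  maxlen : ∀ (m : ℕ) (c : Fin (m + 1) → L), StrictMono c → m ≤ n
  j : Fin n → L
  m : Fin n → L
  j_irr : ∀ i, SupIrred (j i)
  m_irr : ∀ i, InfIrred (m i)
  j_inj : Function.Injective j
  m_inj : Function.Injective m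
  j_surj : ∀ a : L, SupIrred a → a ∈ Set.range j
  m_surj : ∀ a : L, InfIrred a → a ∈ Set.range m
  x_eq_sup : ∀ i : Fin (n + 1),
    x i = (Finset.univ.filter fun k : Fin n => (k : ℕ) < (i : ℕ)).sup j
  x_eq_inf : ∀ i : Fin (n + 1),
    x i = (Finset.univ.filter fun k : Fin n => (i : ℕ) ≤ (k : ℕ)).inf m

namespace ExtremalChainData

variable {L : Type*} [Lattice L] [Fintype L] [BoundedOrder L] {n : ℕ}

/-- `x_J`: the set of indices of join-irreducibles lying below `a`. -/
def setJ (D : ExtremalChainData L n) (a : L) : Set (Fin n) := {i | D.j i ≤ a}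

/-- `x_M`: the set of indices of meet-irreducibles lying above `a`. -/
def setM (D : ExtremalChainData L n) (a : L) : Set (Fin n) := {i | a ≤ D.m i}

/-- The Galois graph: a directed edge `i → k` when `jᵢ ≰ m_k` and `i ≠ k`. -/
def galoisEdge (D : ExtremalChainData L n) (i k : Fin n) : Prop :=
  ¬ D.j i ≤ D.m k ∧ i ≠ k

/-- The left modular labelling: `i` is the label of the cover `y ⋖ z` iff `i` is
minimal with `y ⊔ (xᵢ ⊓ z) = z`. -/
def IsLabel (D : ExtremalChainData L n) (y z : L) (i : Fin n) : Prop :=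
  y ⊔ (D.x i.succ ⊓ z) = z ∧ ∀ k : Fin n, y ⊔ (D.x k.succ ⊓ z) = z → i ≤ k

open scoped Classical in
/-- `D^γ(a)`: the set of labels of cover relations below `a`. -/
noncomputable def downLabels (D : ExtremalChainData L n) (a : L) : Finset (Fin n) :=
  Finset.univ.filter fun i => ∃ y, y ⋖ a ∧ D.IsLabel y a i

open scoped Classical in
/-- `U^γ(a)`: the set of labels of cover relations above `a`. -/
noncomputable def upLabels (D : ExtremalChainData L n) (a : L) : Finset (Fin n) :=
  Finset.univ.filter fun i => ∃ z, a ⋖ z ∧ D.IsLabel a z i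

/-- The fixed chain consists of left modular elements, i.e. the lattice is trim. -/
def IsTrim (D : ExtremalChainData L n) : Prop := ∀ i, LeftModular (D.x i)

end ExtremalChainData

open ExtremalChainData

lemma exists_supIrred_le_not_le' {α : Type*} [Lattice α] [Finite α] [BoundedOrder α]
    {c y : α} (h : ¬ c ≤ y) : ∃ a, SupIrred a ∧ a ≤ c ∧ ¬ a ≤ y := by
  obtain ⟨s, hs, hirr⟩ := exists_supIrred_decomposition c
  by_contra hcon
  push_neg at hcon
  apply h
  rw [← hs]
  exact Finset.sup_le fun b hb =>
    hcon b (hirr hb) (hs ▸ Finset.le_sup (f := id) hb)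

lemma exists_infIrred_ge_not_ge' {α : Type*} [Lattice α] [Finite α] [BoundedOrder α]
    {e z : α} (h : ¬ z ≤ e) : ∃ a, InfIrred a ∧ e ≤ a ∧ ¬ z ≤ a := by
  have h' : ¬ (OrderDual.toDual e) ≤ (OrderDual.toDual z) := h
  obtain ⟨a, hairr, hac, hay⟩ := exists_supIrred_le_not_le' h'
  exact ⟨OrderDual.ofDual a, supIrred_toDual.mp hairr, hac, hay⟩

namespace Aux

variable {L : Type*} [Lattice L] [Fintype L] [BoundedOrder L] {n : ℕ}

lemma j_le_x (D : ExtremalChainData L n) {k : Fin n} {s : Fin (n + 1)}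
    (h : (k : ℕ) < (s : ℕ)) : D.j k ≤ D.x s := by
  classical
  rw [D.x_eq_sup]
  exact Finset.le_sup (by simp [h])

lemma x_le_m (D : ExtremalChainData L n) {s : Fin (n + 1)} {k : Fin n}
    (h : (s : ℕ) ≤ (k : ℕ)) : D.x s ≤ D.m k := by
  classical
  rw [D.x_eq_inf]
  exact Finset.inf_le (by simp [h])

lemma x_succ_eq (D : ExtremalChainData L n) (k : Fin n) :
    D.x k.succ = D.x k.castSucc ⊔ D.j k := by
  classical
  apply le_antisymm
  · rw [D.x_eq_sup k.succ]
    refine Finset.sup_le fun t ht => ?_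
    simp only [Finset.mem_filter, Finset.mem_univ, true_and, Fin.val_succ] at ht
    rcases lt_or_eq_of_le (Nat.lt_succ_iff.mp ht) with h | h
    · exact le_trans (j_le_x D (by simpa using h)) le_sup_left
    · exact (Fin.ext h : t = k) ▸ le_sup_right
  · exact sup_le (D.x_strictMono.monotone (Fin.castSucc_lt_succ : k.castSucc < k.succ).le)
      (j_le_x D (by simp))

lemma x_castSucc_eq (D : ExtremalChainData L n) (k : Fin n) :
    D.x k.castSucc = D.x k.succ ⊓ D.m k := by
  classical
  apply le_antisymm
  · exact le_inf (D.x_strictMono.monotone (Fin.castSucc_lt_succ : k.castSucc < k.succ).le)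
      (x_le_m D (by simp))
  · rw [D.x_eq_inf k.castSucc]
    refine Finset.le_inf fun t ht => ?_
    simp only [Finset.mem_filter, Finset.mem_univ, true_and, Fin.coe_castSucc] at ht
    rcases lt_or_eq_of_le ht with h | h
    · exact le_trans inf_le_left (x_le_m D (by simpa using h))
    · exact (Fin.ext h.symm : t = k) ▸ inf_le_right

lemma j_not_le_x (D : ExtremalChainData L n) (k : Fin n) :
    ¬ D.j k ≤ D.x k.castSucc := by
  intro h
  have : D.x k.succ ≤ D.x k.castSucc := by
    rw [x_succ_eq]; exact sup_le le_rfl h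
  exact absurd this (not_le_of_gt (D.x_strictMono (Fin.castSucc_lt_succ : k.castSucc < k.succ)))

lemma x_succ_not_le_m (D : ExtremalChainData L n) (k : Fin n) :
    ¬ D.x k.succ ≤ D.m k := by
  intro h
  have : D.x k.succ ≤ D.x k.castSucc := by
    rw [x_castSucc_eq]; exact le_inf le_rfl h
  exact absurd this (not_le_of_gt (D.x_strictMono (Fin.castSucc_lt_succ : k.castSucc < k.succ)))

lemma j_not_le_m (D : ExtremalChainData L n) (k : Fin n) :
    ¬ D.j k ≤ D.m k := by
  intro h
  apply x_succ_not_le_m D k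
  rw [x_succ_eq]
  exact sup_le (x_le_m D (by simp)) h

end Aux

open Aux


/-- In a trim lattice, for every cover relation `y ⋖ z` the set `y_M ∩ z_J` is
a singleton `{i}`, with `i = min (z_J \ y_J) = max (y_M \ z_M)`. -/
theorem cover_overlap_singleton {L : Type*} [Lattice L] [Fintype L] [BoundedOrder L]
    {n : ℕ} (D : ExtremalChainData L n) (hD : D.IsTrim) :
    ∀ y z : L, y ⋖ z → ∃ i : Fin n,
      D.setM y ∩ D.setJ z = {i} ∧
      IsLeast (D.setJ z \ D.setJ y) i ∧
      IsGreatest (D.setM y \ D.setM z) i := by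
  classical
  intro y z hyz
  -- `n ≠ 0`
  have hn : n ≠ 0 := by
    rintro rfl
    have h1 : (⊥ : L) = ⊤ := by rw [← D.x_bot, ← D.x_top]; rfl
    exact hyz.lt.not_ge (le_trans le_top (h1 ▸ le_refl _) |>.trans bot_le)
  -- the set of indices `k` with `y ⊔ (x (k+1) ⊓ z) = z`
  set S : Finset (Fin n) :=
    Finset.univ.filter (fun k : Fin n => y ⊔ (D.x k.succ ⊓ z) = z) with hS
  have hSne : S.Nonempty := by
    obtain ⟨m, rfl⟩ := Nat.exists_eq_succ_of_ne_zero hn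
    refine ⟨Fin.last m, ?_⟩
    have hlast : (Fin.last m).succ = Fin.last (m + 1) := by
      ext; simp
    simp only [hS, Finset.mem_filter, Finset.mem_univ, true_and, hlast, D.x_top]
    rw [top_inf_eq]
    exact sup_eq_right.mpr hyz.lt.le
  set i : Fin n := S.min' hSne with hi
  have hiS : y ⊔ (D.x i.succ ⊓ z) = z := by
    have := S.min'_mem hSne
    simpa [hS] using this
  have hmin : ∀ k : Fin n, y ⊔ (D.x k.succ ⊓ z) = z → i ≤ k := by
    intro k hk
    exact S.min'_le k (by simp [hS, hk])
  -- `z ≤ y ⊔ x (i+1)`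
  have hz_le : z ≤ y ⊔ D.x i.succ :=
    hiS ▸ sup_le_sup_left inf_le_left y
  -- `x i ⊓ z ≤ y`
  have hF2 : D.x i.castSucc ⊓ z ≤ y := by
    have hle : y ⊔ (D.x i.castSucc ⊓ z) ≤ z := sup_le hyz.lt.le inf_le_right
    rcases hyz.eq_or_eq le_sup_left hle with h | h
    · exact le_trans le_sup_right h.le
    · -- contradiction with minimality
      exfalso
      rcases Nat.eq_zero_or_pos (i : ℕ) with h0 | h0
      · have : i.castSucc = 0 := by ext; simpa using h0
        rw [this, D.x_bot, bot_inf_eq, sup_bot_eq] at h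
        exact hyz.lt.ne h
      · set k' : Fin n := ⟨(i : ℕ) - 1, lt_of_le_of_lt (Nat.sub_le _ _) i.isLt⟩
        have hk's : k'.succ = i.castSucc := by
          ext; simp [k', Nat.sub_add_cancel h0]
        have : i ≤ k' := hmin k' (by rw [hk's]; exact h)
        have : (i : ℕ) ≤ (i : ℕ) - 1 := this
        omega
  -- `z ≰ y ⊔ x i`
  have znle : ¬ z ≤ y ⊔ D.x i.castSucc := by
    intro h
    have hlm := hD i.castSucc y z hyz.lt.le
    rw [inf_eq_right.mpr h, sup_eq_left.mpr hF2] at hlm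
    exact hyz.lt.ne' hlm
  -- `j i ≤ z` and `j i ≰ y`
  have hc : ¬ D.x i.succ ⊓ z ≤ y := by
    intro h
    have : y ⊔ (D.x i.succ ⊓ z) = y := sup_eq_left.mpr h
    exact hyz.lt.ne (this ▸ hiS)
  obtain ⟨a, hairr, hac, hay⟩ := exists_supIrred_le_not_le' hc
  obtain ⟨t, rfl⟩ := D.j_surj a hairr
  have ht_i : t = i := by
    by_contra hne
    rcases lt_or_gt_of_ne hne with hlt | hgt
    · -- t < i : j t ≤ x i ⊓ z ≤ y
      apply hay
      refine le_trans (le_inf ?_ (hac.trans inf_le_right)) hF2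
      exact j_le_x D (by rw [Fin.coe_castSucc]; exact hlt)
    · -- i < t : j t ≤ x (i+1) ≤ x t, contradiction
      exact absurd ((hac.trans inf_le_left).trans
        (D.x_strictMono.monotone (show i.succ ≤ t.castSucc by
          rw [Fin.le_def, Fin.val_succ, Fin.coe_castSucc]; exact hgt))) (j_not_le_x D t)
  rw [ht_i] at hac hay
  have hjz : D.j i ≤ z := hac.trans inf_le_right
  have hjy : ¬ D.j i ≤ y := hay
  -- `y ≤ m i` and `z ≰ m i`
  obtain ⟨b, hbirr, heb, hzb⟩ := exists_infIrred_ge_not_ge' znle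
  obtain ⟨s, rfl⟩ := D.m_surj b hbirr
  have hs_i : s = i := by
    by_contra hne
    rcases lt_or_gt_of_ne hne with hlt | hgt
    · -- s < i : x (s+1) ≤ x i ≤ m s, contradiction
      apply x_succ_not_le_m D s
      refine le_trans (D.x_strictMono.monotone
        (show s.succ ≤ i.castSucc by rw [Fin.le_def, Fin.val_succ, Fin.coe_castSucc]; exact hlt))
        (le_trans le_sup_right heb)
    · -- i < s : z ≤ y ⊔ x (i+1) ≤ m s, contradiction
      apply hzb
      refine le_trans hz_le (sup_le (le_trans le_sup_left heb) ?_)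
      exact x_le_m D (by rw [Fin.val_succ]; exact hgt)
  rw [hs_i] at heb hzb
  have hym : y ≤ D.m i := le_trans le_sup_left heb
  have hzm : ¬ z ≤ D.m i := hzb
  -- the two bounds
  have LB : ∀ k : Fin n, D.j k ≤ z → ¬ D.j k ≤ y → i ≤ k := by
    intro k hkz hky
    by_contra hlt
    push_neg at hlt
    apply hky
    refine le_trans (le_inf ?_ hkz) hF2
    exact j_le_x D (by rw [Fin.coe_castSucc]; exact hlt)
  have UB : ∀ k : Fin n, y ≤ D.m k → ¬ z ≤ D.m k → k ≤ i := by
    intro k hky hkz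
    by_contra hlt
    push_neg at hlt
    apply hkz
    refine le_trans hz_le (sup_le hky ?_)
    exact x_le_m D (by rw [Fin.val_succ]; exact hlt)
  refine ⟨i, ?_, ⟨⟨hjz, hjy⟩, ?_⟩, ⟨⟨hym, hzm⟩, ?_⟩⟩
  · ext k
    simp only [Set.mem_inter_iff, Set.mem_singleton_iff, setM, setJ, Set.mem_setOf_eq]
    constructor
    · rintro ⟨hk1, hk2⟩
      have hky : ¬ D.j k ≤ y := fun h => j_not_le_m D k (h.trans hk1)
      have hkz : ¬ z ≤ D.m k := fun h => j_not_le_m D k (hk2.trans h)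
      exact le_antisymm (UB k hk1 hkz) (LB k hk2 hky)
    · rintro rfl
      exact ⟨hym, hjz⟩
  · rintro k ⟨hkz, hky⟩
    exact LB k hkz hky
  · rintro k ⟨hky, hkz⟩
    exact UB k hky hkz
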